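/- Under the hypotheses of the previous statement, with φ twice differentiable, A(1) > 0, c < π_f (so that sin φ(1) = 1), and φ'(1) ≠ 0, the second derivative of v at ω = 1 satisfies v''(1) = -(a π_f/(2ζ)) (φ'(1))² < 0, so ω = 1 is a strict local maximum of the average center-of-mass speed. -/

import Mathlib

open Real

theorem stmt_10 (ζ πf πσ c a : ℝ)
    (hζ : 0 < ζ) (hπf : 0 < πf) (hπσ : 0 ≤ πσ) (hc : 0 ≤ c) (hcπf : c < πf)
    (ha : a ∈ Set.Ioo (0 : ℝ) 1)
    (A φ : ℝ → ℝ) (s : Set ℝ) (hs : IsOpen s) (h1 : (1 : ℝ) ∈ s)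
    (hAdiff : ∀ ω ∈ s, DifferentiableAt ℝ A ω)
    (hφdiff : ∀ ω ∈ s, DifferentiableAt ℝ φ ω)
    (hφdiff2 : ∀ ω ∈ s, DifferentiableAt ℝ (deriv φ) ω)
    (hApos : ∀ ω ∈ s, 0 < A ω)
    (heq1 : ∀ ω ∈ s, πf * Real.sin (φ ω) = ζ * A ω * ω + c)
    (heq2 : ∀ ω ∈ s, 2 * πf * Real.cos (φ ω) = A ω * (1 - ω ^ 2))
    (hφ' : deriv φ 1 ≠ 0) :
    deriv (deriv (fun ω => (a / (2 * ζ)) * (πf * Real.sin (φ ω) - c))) 1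
        = -(a * πf / (2 * ζ)) * (deriv φ 1) ^ 2 ∧
      deriv (deriv (fun ω => (a / (2 * ζ)) * (πf * Real.sin (φ ω) - c))) 1 < 0 ∧
      IsLocalMax (fun ω => (a / (2 * ζ)) * (πf * Real.sin (φ ω) - c)) 1 := by
  set v : ℝ → ℝ := fun ω => (a / (2 * ζ)) * (πf * Real.sin (φ ω) - c) with hv
  -- facts at ω = 1
  have hcos1 : Real.cos (φ 1) = 0 := by
    have h := heq2 1 h1
    have h0 : 2 * πf * Real.cos (φ 1) = 0 := by rw [h]; ring
    have hπf' : (2 : ℝ) * πf ≠ 0 := by positivity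
    exact (mul_eq_zero.mp h0).resolve_left hπf'
  have hsin1 : Real.sin (φ 1) = 1 := by
    have hsq : Real.sin (φ 1) ^ 2 = 1 := by
      have := Real.sin_sq_add_cos_sq (φ 1)
      rw [hcos1] at this; nlinarith
    have hpos : 0 < Real.sin (φ 1) := by
      have h := heq1 1 h1
      have hA := hApos 1 h1
      nlinarith
    nlinarith
  -- derivative of v on s
  have hderiv : ∀ ω ∈ s, HasDerivAt v ((a / (2 * ζ)) * πf * (Real.cos (φ ω) * deriv φ ω)) ω := by
    intro ω hω
    have hφd := (hφdiff ω hω).hasDerivAt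
    have h1' : HasDerivAt (fun x => Real.sin (φ x)) (Real.cos (φ ω) * deriv φ ω) ω :=
      (Real.hasDerivAt_sin (φ ω)).comp ω hφd
    have := (h1'.const_mul πf).sub_const c |>.const_mul (a / (2 * ζ))
    exact this.congr_deriv (by ring)
  set g : ℝ → ℝ := fun ω => (a / (2 * ζ)) * πf * (Real.cos (φ ω) * deriv φ ω) with hg
  have heq : deriv v =ᶠ[nhds 1] g := by
    filter_upwards [hs.mem_nhds h1] with ω hω
    exact (hderiv ω hω).deriv
  -- second derivative
  have hgd : HasDerivAt g ((a / (2 * ζ)) * πf *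
      ((-Real.sin (φ 1) * deriv φ 1) * deriv φ 1 + Real.cos (φ 1) * deriv (deriv φ) 1)) 1 := by
    have hφd := (hφdiff 1 h1).hasDerivAt
    have hcosd : HasDerivAt (fun x => Real.cos (φ x)) (-Real.sin (φ 1) * deriv φ 1) 1 :=
      (Real.hasDerivAt_cos (φ 1)).comp 1 hφd
    have hφ'd := (hφdiff2 1 h1).hasDerivAt
    exact (hcosd.mul hφ'd).const_mul _
  have hvd2 : HasDerivAt (deriv v) (-(a * πf / (2 * ζ)) * (deriv φ 1) ^ 2) 1 := by
    have : HasDerivAt g (-(a * πf / (2 * ζ)) * (deriv φ 1) ^ 2) 1 := by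
      convert hgd using 1
      rw [hsin1, hcos1]; ring
    exact this.congr_of_eventuallyEq heq
  have hval : deriv (deriv v) 1 = -(a * πf / (2 * ζ)) * (deriv φ 1) ^ 2 := hvd2.deriv
  have hneg : -(a * πf / (2 * ζ)) * (deriv φ 1) ^ 2 < 0 := by
    have h2 : 0 < (deriv φ 1) ^ 2 := by
      have := pow_pos (abs_pos.mpr hφ') 2
      rwa [sq_abs] at this
    have : 0 < a * πf / (2 * ζ) := by
      have := ha.1; positivity
    nlinarith [sq_abs (deriv φ 1), abs_pos.mpr hφ']
  refine ⟨hval, hval ▸ hneg, ?_⟩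
  -- first derivative test
  have hv1 : deriv v 1 = 0 := by
    rw [(hderiv 1 h1).deriv, hcos1]; ring
  have hslope : Filter.Tendsto (slope (deriv v) 1) (nhdsWithin 1 {1}ᶜ)
      (nhds (-(a * πf / (2 * ζ)) * (deriv φ 1) ^ 2)) :=
    hasDerivAt_iff_tendsto_slope.mp hvd2
  have hsl_neg : ∀ᶠ x in nhdsWithin 1 {1}ᶜ, slope (deriv v) 1 x < 0 :=
    hslope.eventually_lt_const hneg
  have hkey : ∀ x, slope (deriv v) 1 x < 0 → (x < 1 → 0 ≤ deriv v x) ∧ (1 < x → deriv v x ≤ 0) := by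
    intro x hx
    rw [slope_def_field, div_neg_iff] at hx
    constructor
    · intro hlt
      rcases hx with ⟨h', h''⟩ | ⟨h', h''⟩
      · linarith
      · rw [hv1] at h'; linarith
    · intro hlt
      rcases hx with ⟨h', h''⟩ | ⟨h', h''⟩
      · rw [hv1] at h'; linarith
      · linarith
  apply isLocalMax_of_deriv (f := v)
  · exact (hderiv 1 h1).differentiableAt.continuousAt
  · filter_upwards [nhdsWithin_le_nhds (hs.mem_nhds h1)] with x hx
    exact (hderiv x hx).differentiableAt
  · filter_upwards [(nhdsLT_le_nhdsNE (1:ℝ)) hsl_neg,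
      self_mem_nhdsWithin] with x hx (hx' : x < 1)
    exact ((hkey x hx).1 hx')
  · filter_upwards [(nhdsGT_le_nhdsNE (1:ℝ)) hsl_neg,
      self_mem_nhdsWithin] with x hx (hx' : 1 < x)
    exact ((hkey x hx).2 hx')
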